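/- There exists a constant C > 0 such that for every nonzero integer k and every y ∈ [0,1], ∫₀¹ |G'_k(y,z)| dz ≤ C, where G'_k(y,z) = −k·cosh(k(1−z))·cosh(ky)/sinh(k) for 0 ≤ y ≤ z ≤ 1 and G'_k(y,z) = −k·cosh(kz)·cosh(k(1−y))/sinh(k) for 0 ≤ z < y ≤ 1. -/

import Mathlib

/-- The regular part `G'_k` of the mixed derivative `∂_y ∂_z G_k` away from the diagonal. -/
noncomputable def greenG' (k : ℤ) (y z : ℝ) : ℝ :=
  if y ≤ z then -k * Real.cosh (k * (1 - z)) * Real.cosh (k * y) / Real.sinh k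
  else -k * Real.cosh (k * z) * Real.cosh (k * (1 - y)) / Real.sinh k

lemma greenG'_neg (k : ℤ) (y z : ℝ) : greenG' (-k) y z = greenG' k y z := by
  unfold greenG'
  push_cast
  rw [show (-(k:ℝ)) * (1 - z) = -(k*(1-z)) by ring,
      show (-(k:ℝ)) * y = -(k*y) by ring,
      show (-(k:ℝ)) * z = -(k*z) by ring,
      show (-(k:ℝ)) * (1 - y) = -(k*(1-y)) by ring,
      Real.cosh_neg, Real.cosh_neg, Real.cosh_neg, Real.cosh_neg, Real.sinh_neg]
  split <;> ring

lemma abs_expr {r a b s : ℝ} (hr : 0 < r) (ha : 0 < a) (hb : 0 < b) (hs : 0 < s) :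
    |(-r * a * b / s)| = r * a * b / s := by
  have : -r * a * b / s = -(r * a * b / s) := by ring
  rw [this, abs_neg, abs_of_pos (by positivity)]

lemma key (r : ℝ) (hr : 0 < r) (y : ℝ) (hy0 : 0 ≤ y) (hy1 : y ≤ 1) :
    (∫ z in (0:ℝ)..1, |(if y ≤ z then -r * Real.cosh (r*(1-z)) * Real.cosh (r*y) / Real.sinh r
       else -r * Real.cosh (r*z) * Real.cosh (r*(1-y)) / Real.sinh r)|) = 1 := by
  set s := Real.sinh r with hs_def
  have hs : 0 < s := Real.sinh_pos_iff.2 hr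
  set f : ℝ → ℝ := fun z =>
    if y ≤ z then -r * Real.cosh (r*(1-z)) * Real.cosh (r*y) / s
    else -r * Real.cosh (r*z) * Real.cosh (r*(1-y)) / s with hf_def
  have hf : Continuous f := by
    apply Continuous.if_le (by fun_prop) (by fun_prop) continuous_const continuous_id
    intro z hz
    simp only [id] at hz
    subst hz
    ring
  have hInt1 : IntervalIntegrable (fun z => |f z|) MeasureTheory.volume 0 y :=
    (hf.abs).intervalIntegrable _ _
  have hInt2 : IntervalIntegrable (fun z => |f z|) MeasureTheory.volume y 1 :=
    (hf.abs).intervalIntegrable _ _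
  have hsplit : (∫ z in (0:ℝ)..1, |f z|)
      = (∫ z in (0:ℝ)..y, |f z|) + ∫ z in y..(1:ℝ), |f z| :=
    (intervalIntegral.integral_add_adjacent_intervals hInt1 hInt2).symm
  have h1 : (∫ z in (0:ℝ)..y, |f z|)
      = ∫ z in (0:ℝ)..y, r * Real.cosh (r*z) * Real.cosh (r*(1-y)) / s := by
    apply intervalIntegral.integral_congr
    intro z hz
    rw [Set.uIcc_of_le hy0] at hz
    obtain ⟨hz0, hzy⟩ := hz
    by_cases hyz : y ≤ z
    · have hzy' : z = y := le_antisymm hzy hyz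
      subst hzy'
      simp only [hf_def, if_pos le_rfl]
      rw [abs_expr hr (Real.cosh_pos _) (Real.cosh_pos _) hs]
      ring
    · simp only [hf_def, if_neg hyz]
      exact abs_expr hr (Real.cosh_pos _) (Real.cosh_pos _) hs
  have h2 : (∫ z in y..(1:ℝ), |f z|)
      = ∫ z in y..(1:ℝ), r * Real.cosh (r*(1-z)) * Real.cosh (r*y) / s := by
    apply intervalIntegral.integral_congr
    intro z hz
    rw [Set.uIcc_of_le hy1] at hz
    simp only [hf_def, if_pos hz.1]
    exact abs_expr hr (Real.cosh_pos _) (Real.cosh_pos _) hs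
  have hI1 : (∫ z in (0:ℝ)..y, r * Real.cosh (r*z) * Real.cosh (r*(1-y)) / s)
      = Real.sinh (r*y) * Real.cosh (r*(1-y)) / s := by
    have hd : ∀ z ∈ Set.uIcc (0:ℝ) y, HasDerivAt
        (fun z => Real.sinh (r*z) * Real.cosh (r*(1-y)) / s)
        (r * Real.cosh (r*z) * Real.cosh (r*(1-y)) / s) z := by
      intro z _
      have h0 : HasDerivAt (fun z : ℝ => r * z) r z := by
        simpa using (hasDerivAt_id z).const_mul r
      have h1 := (h0.sinh).mul_const (Real.cosh (r*(1-y)))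
      have h2 := h1.div_const s
      exact h2.congr_deriv (by ring)
    have := intervalIntegral.integral_eq_sub_of_hasDerivAt hd
      ((by fun_prop : Continuous fun z =>
        r * Real.cosh (r*z) * Real.cosh (r*(1-y)) / s).intervalIntegrable 0 y)
    simpa using this
  have hI2 : (∫ z in y..(1:ℝ), r * Real.cosh (r*(1-z)) * Real.cosh (r*y) / s)
      = Real.sinh (r*(1-y)) * Real.cosh (r*y) / s := by
    have hd : ∀ z ∈ Set.uIcc y (1:ℝ), HasDerivAt
        (fun z => -Real.sinh (r*(1-z)) * Real.cosh (r*y) / s)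
        (r * Real.cosh (r*(1-z)) * Real.cosh (r*y) / s) z := by
      intro z _
      have h0 : HasDerivAt (fun z : ℝ => r * (1 - z)) (-r) z := by
        simpa using ((hasDerivAt_id z).const_sub (1:ℝ)).const_mul r
      have h1 := ((h0.sinh).neg.mul_const (Real.cosh (r*y))).div_const s
      exact h1.congr_deriv (by ring)
    have := intervalIntegral.integral_eq_sub_of_hasDerivAt hd
      ((by fun_prop : Continuous fun z =>
        r * Real.cosh (r*(1-z)) * Real.cosh (r*y) / s).intervalIntegrable y 1)
    simp only [mul_one, sub_self, mul_zero, Real.sinh_zero] at this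
    rw [this]
    ring
  rw [hsplit, h1, h2, hI1, hI2]
  have hadd := Real.sinh_add (r*y) (r*(1-y))
  rw [show r*y + r*(1-y) = r by ring] at hadd
  field_simp [hs_def]
  linarith [hadd]

theorem greenG'_integral_bound :
    ∃ C : ℝ, 0 < C ∧ ∀ (k : ℤ), k ≠ 0 → ∀ y ∈ Set.Icc (0:ℝ) 1,
      (∫ z in (0:ℝ)..1, |greenG' k y z|) ≤ C := by
  refine ⟨1, one_pos, ?_⟩
  intro k hk y hy
  obtain ⟨hy0, hy1⟩ := hy
  -- reduce to positive k
  have main : ∀ m : ℤ, 0 < m → (∫ z in (0:ℝ)..1, |greenG' m y z|) = 1 := by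
    intro m hm
    have hr : (0:ℝ) < (m:ℝ) := by exact_mod_cast hm
    have hkey := key (m:ℝ) hr y hy0 hy1
    have heq : (∫ z in (0:ℝ)..1, |greenG' m y z|)
        = ∫ z in (0:ℝ)..1, |(if y ≤ z then -(m:ℝ) * Real.cosh ((m:ℝ)*(1-z)) * Real.cosh ((m:ℝ)*y) / Real.sinh (m:ℝ)
           else -(m:ℝ) * Real.cosh ((m:ℝ)*z) * Real.cosh ((m:ℝ)*(1-y)) / Real.sinh (m:ℝ))| := by
      apply intervalIntegral.integral_congr
      intro z _
      rfl
    rw [heq, hkey]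
  rcases lt_or_gt_of_ne hk with hneg | hpos
  · have h := main (-k) (by omega)
    have : (∫ z in (0:ℝ)..1, |greenG' (-k) y z|) = ∫ z in (0:ℝ)..1, |greenG' k y z| := by
      apply intervalIntegral.integral_congr
      intro z _
      show |greenG' (-k) y z| = |greenG' k y z|
      rw [greenG'_neg]
    rw [this] at h
    exact le_of_eq h
  · exact le_of_eq (main k hpos)
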